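/- For i = 1, 2 let g_i(x) := (a_i/2) x² + c_i x + d_i with a_i, c_i, d_i ∈ ℝ. For ε > 0 define S_x(x, ε) := g₁'(x) if g₂(x) − g₁(x) ≤ −ε/2; S_x(x, ε) := λ₁ g₁'(x) + λ₂ g₂'(x) with λ₂ := (g₂(x) − g₁(x))/ε + 1/2 and λ₁ := 1 − λ₂, if |g₂(x) − g₁(x)| < ε/2; and S_x(x, ε) := g₂'(x) if g₂(x) − g₁(x) ≥ ε/2. Then for every ε > 0 and all x₁, x₂ ∈ ℝ, (S_x(x₁, ε) − S_x(x₂, ε)) (x₁ − x₂) ≥ −2 max{|a₁|, |a₂|} (x₁ − x₂)². In particular, the semimonotonicity constant α₀ = 2 max{|a₁|, |a₂|} is independent of the regularization parameter ε. -/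

import Mathlib

/-- For two quadratics `gᵢ(x) = (aᵢ/2)x² + cᵢx + dᵢ`, the derivative
`S_x(·, ε)` of the Zang smoothing of `max{g₁, g₂}` (given by its explicit three-case
formula, with `gᵢ'(x) = aᵢ x + cᵢ`) satisfies the semimonotonicity estimate
`(S_x(x₁,ε) - S_x(x₂,ε))(x₁ - x₂) ≥ -2 max{|a₁|,|a₂|} (x₁ - x₂)²`, with constant
independent of `ε`. -/
theorem zang_quadratic_semimonotone
    (a₁ a₂ c₁ c₂ d₁ d₂ ε : ℝ) (hε : 0 < ε)
    (g₁ g₂ Sx : ℝ → ℝ)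
    (hg₁ : ∀ x, g₁ x = a₁ / 2 * x ^ 2 + c₁ * x + d₁)
    (hg₂ : ∀ x, g₂ x = a₂ / 2 * x ^ 2 + c₂ * x + d₂)
    (hSx_left : ∀ x, g₂ x - g₁ x ≤ -(ε / 2) → Sx x = a₁ * x + c₁)
    (hSx_mid : ∀ x, |g₂ x - g₁ x| < ε / 2 →
      Sx x = (1 - ((g₂ x - g₁ x) / ε + 1 / 2)) * (a₁ * x + c₁)
        + ((g₂ x - g₁ x) / ε + 1 / 2) * (a₂ * x + c₂))
    (hSx_right : ∀ x, ε / 2 ≤ g₂ x - g₁ x → Sx x = a₂ * x + c₂) :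
    ∀ x₁ x₂ : ℝ,
      (Sx x₁ - Sx x₂) * (x₁ - x₂) ≥ -(2 * max |a₁| |a₂|) * (x₁ - x₂) ^ 2 := by
  -- clamped weight
  set μ : ℝ → ℝ := fun x => min (max ((g₂ x - g₁ x) / ε + 1 / 2) 0) 1 with hμdef
  have hμ0 : ∀ x, 0 ≤ μ x := fun x => le_min (le_max_right _ _) zero_le_one
  have hμ1 : ∀ x, μ x ≤ 1 := fun x => min_le_right _ _
  -- uniform representation of Sx
  have hS : ∀ x, Sx x = (a₁ * x + c₁) + μ x * ((a₂ - a₁) * x + (c₂ - c₁)) := by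
    intro x
    rcases le_or_gt (g₂ x - g₁ x) (-(ε / 2)) with hL | hL
    · have ht : (g₂ x - g₁ x) / ε + 1 / 2 ≤ 0 := by
        have : (g₂ x - g₁ x) / ε ≤ -(ε/2) / ε := by
          exact div_le_div_of_nonneg_right hL hε.le
        have h2 : -(ε/2) / ε = -(1/2) := by field_simp
        linarith [h2 ▸ this]
      have : μ x = 0 := by
        simp only [hμdef]
        rw [max_eq_right ht, min_eq_left (le_of_lt one_pos)]
      rw [hSx_left x hL, this]; ring
    · rcases lt_or_ge (g₂ x - g₁ x) (ε / 2) with hR | hR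
      · have habs : |g₂ x - g₁ x| < ε / 2 := abs_lt.mpr ⟨by linarith, hR⟩
        have h0 : (0:ℝ) ≤ (g₂ x - g₁ x) / ε + 1 / 2 := by
          have : -(ε/2) / ε ≤ (g₂ x - g₁ x) / ε :=
            div_le_div_of_nonneg_right (le_of_lt hL) hε.le
          have h2 : -(ε/2) / ε = -(1/2) := by field_simp
          linarith [h2 ▸ this]
        have h1 : (g₂ x - g₁ x) / ε + 1 / 2 ≤ 1 := by
          have : (g₂ x - g₁ x) / ε ≤ (ε/2) / ε :=
            div_le_div_of_nonneg_right (le_of_lt hR) hε.le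
          have h2 : (ε/2) / ε = (1/2:ℝ) := by field_simp
          linarith [h2 ▸ this]
        have hμx : μ x = (g₂ x - g₁ x) / ε + 1 / 2 := by
          simp only [hμdef]
          rw [max_eq_left h0, min_eq_left h1]
        rw [hSx_mid x habs, hμx]; ring
      · have ht : (1:ℝ) ≤ (g₂ x - g₁ x) / ε + 1 / 2 := by
          have : (ε/2) / ε ≤ (g₂ x - g₁ x) / ε :=
            div_le_div_of_nonneg_right hR hε.le
          have h2 : (ε/2) / ε = (1/2:ℝ) := by field_simp
          linarith [h2 ▸ this]
        have hμx : μ x = 1 := by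
          simp only [hμdef]
          rw [max_eq_left (le_trans (le_of_lt one_pos) ht), min_eq_right ht]
        rw [hSx_right x hR, hμx]; ring
  -- monotonicity of μ in h := g₂ - g₁
  have hmono : ∀ x y, (μ x - μ y) * ((g₂ x - g₁ x) - (g₂ y - g₁ y)) ≥ 0 := by
    intro x y
    rcases le_total (g₂ x - g₁ x) (g₂ y - g₁ y) with h | h
    · have hμ : μ x ≤ μ y := by
        apply min_le_min_right
        apply max_le_max_right
        exact add_le_add_left (div_le_div_of_nonneg_right h hε.le) _
      nlinarith
    · have hμ : μ y ≤ μ x := by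
        apply min_le_min_right
        apply max_le_max_right
        exact add_le_add_left (div_le_div_of_nonneg_right h hε.le) _
      nlinarith
  intro x₁ x₂
  have key : (g₂ x₁ - g₁ x₁) - (g₂ x₂ - g₁ x₂)
      = (x₁ - x₂) * (((a₂ - a₁) * x₁ + (c₂ - c₁)) + ((a₂ - a₁) * x₂ + (c₂ - c₁))) / 2 := by
    rw [hg₁ x₁, hg₂ x₁, hg₁ x₂, hg₂ x₂]; ring
  have hm := hmono x₁ x₂
  rw [key] at hm
  have h1 : -|a₁| ≤ a₁ := neg_abs_le a₁
  have h2 : -|a₂| ≤ a₂ := neg_abs_le a₂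
  have hM1 : |a₁| ≤ max |a₁| |a₂| := le_max_left _ _
  have hM2 : |a₂| ≤ max |a₁| |a₂| := le_max_right _ _
  have hsq : (0:ℝ) ≤ (x₁ - x₂) ^ 2 := sq_nonneg _
  have hM0 : (0:ℝ) ≤ max |a₁| |a₂| := le_trans (abs_nonneg a₁) hM1
  have t1 : 0 ≤ (2 - (μ x₁ + μ x₂)) * (a₁ + max |a₁| |a₂|) * (x₁ - x₂) ^ 2 :=
    mul_nonneg (mul_nonneg (by linarith [hμ1 x₁, hμ1 x₂]) (by linarith)) hsq
  have t2 : 0 ≤ (μ x₁ + μ x₂) * (a₂ + max |a₁| |a₂|) * (x₁ - x₂) ^ 2 :=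
    mul_nonneg (mul_nonneg (by linarith [hμ0 x₁, hμ0 x₂]) (by linarith)) hsq
  have t3 : 0 ≤ max |a₁| |a₂| * (x₁ - x₂) ^ 2 := mul_nonneg hM0 hsq
  rw [hS x₁, hS x₂]
  nlinarith [hm, t1, t2, t3]
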